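/- arXiv:2509.24141 — 8 statements merged into one kernel-verified Lean document; each statement's English description precedes it below -/
import Mathlib

section
/- Fix an integer g ≥ 2 and set L = cos(π/(g+1)). For c > 0 let s(c) = 2·arsinh(L / sinh(c/2)). Then there exists a unique c₁ > 0 such that cosh(c₁) = 2·L² + cosh(s(c₁)); equivalently, the equation ℓ_β(c,c) = ℓ_γ(c,c) has a unique positive solution c = c₁. -/
/-- Inverse hyperbolic cosine (for `x ≥ 1`). -/
noncomputable def arcosh (x : ℝ) : ℝ := Real.log (x + Real.sqrt (x ^ 2 - 1))

/-- The seam length `s(c) = 2·arsinh(L / sinh(c/2))`, so that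
`sinh(c/2)·sinh(s(c)/2) = L`. -/
noncomputable def seam (L c : ℝ) : ℝ := 2 * Real.arsinh (L / Real.sinh (c / 2))

lemma exp_quarter_lt : Real.exp (1/4) < 1.3 := by
  have h4 : Real.exp (1/4) ^ 4 = Real.exp 1 := by
    rw [← Real.exp_nat_mul]; norm_num
  by_contra h
  push_neg at h
  have h1 : (1.3:ℝ) ^ 4 ≤ Real.exp (1/4) ^ 4 :=
    pow_le_pow_left₀ (by norm_num) h 4
  have h2 := Real.exp_one_lt_d9
  rw [← h4] at h2
  nlinarith

lemma exp_three_half_gt : (3:ℝ) < Real.exp (3/2) := by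
  have h2 : Real.exp (3/2) ^ 2 = Real.exp 3 := by
    rw [← Real.exp_nat_mul]; norm_num
  have h3 : Real.exp 1 ^ 3 = Real.exp 3 := by
    rw [← Real.exp_nat_mul]; norm_num
  have he : (2.7182818283:ℝ) < Real.exp 1 := Real.exp_one_gt_d9
  have hp : (0:ℝ) < Real.exp (3/2) := Real.exp_pos _
  have hc : (2.7182818283:ℝ) ^ 3 < Real.exp 1 ^ 3 :=
    pow_lt_pow_left₀ he (by norm_num) (by norm_num)
  nlinarith [sq_nonneg (Real.exp (3/2) - 3)]

/-- The key monotone quantity `f c = cosh c - cosh (seam L c)`. -/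
lemma f_strictMono {L : ℝ} (hL0 : 0 < L) {a b : ℝ} (ha : 0 < a) (hab : a < b) :
    Real.cosh a - Real.cosh (seam L a) < Real.cosh b - Real.cosh (seam L b) := by
  have hsa : 0 < Real.sinh (a/2) := Real.sinh_pos_iff.mpr (by linarith)
  have hsb : 0 < Real.sinh (b/2) := Real.sinh_pos_iff.mpr (by linarith)
  have hdiv : L / Real.sinh (b/2) < L / Real.sinh (a/2) :=
    div_lt_div_of_pos_left hL0 hsa (Real.sinh_lt_sinh.mpr (by linarith))
  have hposb : 0 < L / Real.sinh (b/2) := div_pos hL0 hsb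
  have hsb0 : 0 < Real.arsinh (L / Real.sinh (b/2)) := by
    have := Real.arsinh_lt_arsinh.mpr hposb
    rwa [Real.arsinh_zero] at this
  have hseam : seam L b < seam L a := by
    unfold seam
    have := Real.arsinh_lt_arsinh.mpr hdiv
    linarith
  have hseamb : 0 < seam L b := by unfold seam; linarith
  have h1 : Real.cosh (seam L b) < Real.cosh (seam L a) := by
    rw [Real.cosh_lt_cosh, abs_of_pos hseamb, abs_of_pos (by linarith)]
    exact hseam
  have h2 : Real.cosh a < Real.cosh b := by
    rw [Real.cosh_lt_cosh, abs_of_pos ha, abs_of_pos (by linarith)]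
    exact hab
  linarith

set_option maxHeartbeats 1000000 in
/-- Fix an integer `g ≥ 2` and set `L = cos(π/(g+1))`. For `c > 0` let
`s(c) = 2·arsinh(L / sinh(c/2))`. Then there exists a unique `c₁ > 0` such that
`cosh(c₁) = 2·L² + cosh(s(c₁))`; equivalently, the equation `ℓ_β(c,c) = ℓ_γ(c,c)`
has a unique positive solution `c = c₁`. -/
theorem exists_unique_c1 (g : ℕ) (hg : 2 ≤ g) (L : ℝ)
    (hL : L = Real.cos (Real.pi / (g + 1))) :
    ∃! c₁ : ℝ, 0 < c₁ ∧ Real.cosh c₁ = 2 * L ^ 2 + Real.cosh (seam L c₁) := by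
  have hpi : (0:ℝ) < Real.pi := Real.pi_pos
  have hg3 : (3:ℝ) ≤ (g:ℝ) + 1 := by
    have : (2:ℝ) ≤ (g:ℝ) := by exact_mod_cast hg
    linarith
  have hang0 : 0 < Real.pi / ((g:ℝ) + 1) := by positivity
  have hang3 : Real.pi / ((g:ℝ) + 1) ≤ Real.pi / 3 :=
    div_le_div_of_nonneg_left hpi.le (by norm_num) hg3
  -- L ∈ [1/2, 1]
  have hLhalf : (1/2 : ℝ) ≤ L := by
    rw [hL, ← Real.cos_pi_div_three]
    apply Real.cos_le_cos_of_nonneg_of_le_pi hang0.le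
    · linarith [Real.pi_le_four]
    · exact hang3
  have hL1 : L ≤ 1 := hL ▸ Real.cos_le_one _
  have hL0 : 0 < L := by linarith
  -- value of f at 1/2 is ≤ 0
  have hlow : Real.cosh (1/2:ℝ) - Real.cosh (seam L (1/2)) ≤ 0 := by
    have hs : 0 < Real.sinh (1/4 : ℝ) := Real.sinh_pos_iff.mpr (by norm_num)
    have hsinh_lt : Real.sinh (1/4 : ℝ) < 0.65 := by
      rw [Real.sinh_eq]
      have := exp_quarter_lt
      have := Real.exp_pos (-(1/4):ℝ)
      norm_num at this ⊢
      nlinarith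
    have hsq : Real.sinh (1/4:ℝ) * Real.sinh (1/4:ℝ) ≤ L := by nlinarith
    have hge : Real.sinh (1/4:ℝ) ≤ L / Real.sinh (1/4:ℝ) := (le_div_iff₀ hs).mpr hsq
    have hars : (1/4:ℝ) ≤ Real.arsinh (L / Real.sinh (1/4:ℝ)) := by
      have := Real.arsinh_le_arsinh.mpr hge
      rwa [Real.arsinh_sinh] at this
    have hseam : (1/2:ℝ) ≤ seam L (1/2) := by
      unfold seam; norm_num; linarith
    have : Real.cosh (1/2:ℝ) ≤ Real.cosh (seam L (1/2)) := by
      rw [Real.cosh_le_cosh, abs_of_pos (by norm_num), abs_of_pos (by linarith)]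
      exact hseam
    linarith
  -- value of f at 3 is > 2 L ^ 2
  have hhigh : 2 * L ^ 2 < Real.cosh 3 - Real.cosh (seam L 3) := by
    have he32 : (3:ℝ) < Real.exp (3/2) := exp_three_half_gt
    have hs32 : (1:ℝ) ≤ Real.sinh (3/2 : ℝ) := by
      rw [Real.sinh_eq]
      have h1 : Real.exp (-(3/2):ℝ) * Real.exp (3/2) = 1 := by
        rw [← Real.exp_add]; norm_num
      have h2 : Real.exp (-(3/2):ℝ) ≤ 1 := by nlinarith [Real.exp_pos (-(3/2):ℝ)]
      norm_num
      linarith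
    have hdle : L / Real.sinh (3/2:ℝ) ≤ 1 := by
      rw [div_le_one (by linarith)]; linarith
    have hdpos : 0 ≤ L / Real.sinh (3/2:ℝ) := div_nonneg hL0.le (by linarith)
    have hars0 : 0 ≤ Real.arsinh (L / Real.sinh (3/2:ℝ)) := by
      have := Real.arsinh_le_arsinh.mpr hdpos
      rwa [Real.arsinh_zero] at this
    have hars1 : Real.arsinh (L / Real.sinh (3/2:ℝ)) ≤ Real.arsinh 1 :=
      Real.arsinh_le_arsinh.mpr hdle
    have hars1pos : 0 ≤ Real.arsinh (1:ℝ) := le_trans hars0 hars1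
    have hcosh3 : Real.cosh (seam L 3) ≤ 3 := by
      have hseamle : seam L 3 ≤ 2 * Real.arsinh 1 := by
        unfold seam; norm_num; linarith
      have hseam0 : 0 ≤ seam L 3 := by unfold seam; norm_num; linarith
      have h1 : Real.cosh (seam L 3) ≤ Real.cosh (2 * Real.arsinh 1) := by
        rw [Real.cosh_le_cosh, abs_of_nonneg hseam0, abs_of_nonneg (by linarith)]
        exact hseamle
      have h2 : Real.cosh (2 * Real.arsinh 1) = 3 := by
        rw [Real.cosh_two_mul]
        have := Real.cosh_sq (Real.arsinh 1)
        rw [Real.sinh_arsinh] at this ⊢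
        nlinarith
      linarith
    have hch3 : (5:ℝ) < Real.cosh 3 := by
      rw [Real.cosh_eq]
      have h3 : Real.exp 1 ^ 3 = Real.exp 3 := by
        rw [← Real.exp_nat_mul]; norm_num
      have he : (2.7182818283:ℝ) < Real.exp 1 := Real.exp_one_gt_d9
      have hc : (2.7182818283:ℝ) ^ 3 < Real.exp 1 ^ 3 :=
        pow_lt_pow_left₀ he (by norm_num) (by norm_num)
      have := Real.exp_pos (-3:ℝ)
      nlinarith
    nlinarith
  -- continuity of f on [1/2, 3]
  have hcont : ContinuousOn (fun c => Real.cosh c - Real.cosh (seam L c))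
      (Set.Icc (1/2:ℝ) 3) := by
    apply ContinuousOn.sub Real.continuous_cosh.continuousOn
    apply Real.continuous_cosh.comp_continuousOn
    unfold seam
    apply ContinuousOn.mul continuousOn_const
    apply Real.continuous_arsinh.comp_continuousOn
    apply ContinuousOn.div continuousOn_const
    · exact (Real.continuous_sinh.comp (continuous_id.div_const 2)).continuousOn
    · intro x hx
      exact ne_of_gt (Real.sinh_pos_iff.mpr (by have := hx.1; simp; linarith))
  -- intermediate value theorem
  have hivt := intermediate_value_Icc (by norm_num : (1/2:ℝ) ≤ 3) hcont
  have hmem : 2 * L ^ 2 ∈ Set.Icc (Real.cosh (1/2:ℝ) - Real.cosh (seam L (1/2)))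
      (Real.cosh 3 - Real.cosh (seam L 3)) := by
    have hL2 : 0 ≤ 2 * L ^ 2 := by positivity
    exact ⟨by linarith, by linarith⟩
  obtain ⟨c, hc, hfc⟩ := hivt hmem
  have hcpos : 0 < c := by linarith [hc.1]
  refine ⟨c, ⟨hcpos, by simp only at hfc; linarith⟩, ?_⟩
  rintro c' ⟨hc'pos, hc'eq⟩
  by_contra hne
  have hfc' : Real.cosh c' - Real.cosh (seam L c') = 2 * L ^ 2 := by linarith
  simp only at hfc
  rcases lt_or_gt_of_ne hne with h | h
  · have := f_strictMono hL0 hc'pos h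
    linarith
  · have := f_strictMono hL0 hcpos h
    linarith
end

section
/- Fix an integer g ≥ 2, set L = cos(π/(g+1)), and for c > 0 let s(c) = 2·arsinh(L/sinh(c/2)). Then for every c > 0 one has ℓ_β(c,0) > ℓ_γ(c,0) = 2c and ℓ_β(c,0) > ℓ_α(c,0); that is, at twist parameter t = 0 the curve β is strictly longer than both γ and α. -/
/-- The length `ℓ_α(c,t) = 4·arcosh(cosh(s(c)/2)·cosh(t/2))`. -/
noncomputable def ellAlpha (L c t : ℝ) : ℝ :=
  4 * arcosh (Real.cosh (seam L c / 2) * Real.cosh (t / 2))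

/-- The length
`ℓ_β(c,t) = 2·arcosh(cosh(s(c))·cosh(t/2)·cosh(c−t/2) − sinh(t/2)·sinh(c−t/2))`. -/
noncomputable def ellBeta (L c t : ℝ) : ℝ :=
  2 * arcosh (Real.cosh (seam L c) * Real.cosh (t / 2) * Real.cosh (c - t / 2)
      - Real.sinh (t / 2) * Real.sinh (c - t / 2))

lemma sqrt_cosh_sq_sub_one (x : ℝ) (hx : 0 ≤ x) :
    Real.sqrt (Real.cosh x ^ 2 - 1) = Real.sinh x := by
  have h : Real.cosh x ^ 2 - 1 = Real.sinh x ^ 2 := by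
    have := Real.cosh_sq_sub_sinh_sq x
    nlinarith
  rw [h, Real.sqrt_sq (Real.sinh_nonneg_iff.2 hx)]

lemma arcosh_cosh (x : ℝ) (hx : 0 ≤ x) : arcosh (Real.cosh x) = x := by
  rw [arcosh, sqrt_cosh_sq_sub_one x hx, Real.cosh_add_sinh, Real.log_exp]

lemma lt_arcosh (x y : ℝ) (hx : 0 ≤ x) (h : Real.cosh x < y) : x < arcosh y := by
  have h1 : (1:ℝ) ≤ Real.cosh x := Real.one_le_cosh x
  have hs : Real.sinh x < Real.sqrt (y ^ 2 - 1) := by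
    rw [← sqrt_cosh_sq_sub_one x hx]
    apply Real.sqrt_lt_sqrt (by nlinarith)
    nlinarith
  have h2 : Real.exp x < y + Real.sqrt (y ^ 2 - 1) := by
    rw [← Real.cosh_add_sinh]; linarith
  calc x = Real.log (Real.exp x) := (Real.log_exp x).symm
    _ < _ := Real.log_lt_log (Real.exp_pos x) h2

/-- Fix an integer `g ≥ 2`, set `L = cos(π/(g+1))`, and for `c > 0` let
`s(c) = 2·arsinh(L/sinh(c/2))`. Then for every `c > 0` one has
`ℓ_β(c,0) > ℓ_γ(c,0) = 2c` and `ℓ_β(c,0) > ℓ_α(c,0)`; that is, at twist parameter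
`t = 0` the curve `β` is strictly longer than both `γ` and `α`. -/
theorem beta_longest_at_t_zero (g : ℕ) (hg : 2 ≤ g) (L : ℝ)
    (hL : L = Real.cos (Real.pi / (g + 1))) :
    ∀ c : ℝ, 0 < c → ellBeta L c 0 > 2 * c ∧ ellBeta L c 0 > ellAlpha L c 0 := by
  intro c hc
  have hpi := Real.pi_pos
  have hLpos : 0 < L := by
    rw [hL]
    apply Real.cos_pos_of_mem_Ioo
    constructor
    · have : (0:ℝ) < Real.pi / (g + 1) := by positivity
      linarith
    · rw [div_lt_div_iff₀ (by positivity) two_pos]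
      have : (3:ℝ) ≤ (g:ℝ) + 1 := by
        have : (2:ℝ) ≤ (g:ℝ) := by exact_mod_cast hg
        linarith
      nlinarith
  have hsinh : 0 < Real.sinh (c / 2) := Real.sinh_pos_iff.2 (by linarith)
  have hspos : 0 < seam L c := by
    rw [seam]
    have : 0 < Real.arsinh (L / Real.sinh (c / 2)) :=
      Real.arsinh_pos_iff.2 (by positivity)
    linarith
  have hcosh_s : 1 < Real.cosh (seam L c) := Real.one_lt_cosh.2 (by linarith [hspos] : seam L c ≠ 0)
  have hcosh_c : 1 < Real.cosh c := Real.one_lt_cosh.2 (by linarith : c ≠ 0)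
  have hB : ellBeta L c 0 = 2 * arcosh (Real.cosh (seam L c) * Real.cosh c) := by
    simp [ellBeta]
  constructor
  · rw [hB]
    have : c < arcosh (Real.cosh (seam L c) * Real.cosh c) := by
      apply lt_arcosh _ _ hc.le
      nlinarith [Real.cosh_pos c]
    linarith
  · have hA : ellAlpha L c 0 = 2 * seam L c := by
      simp [ellAlpha, arcosh_cosh _ (by linarith : (0:ℝ) ≤ seam L c / 2)]
      ring
    rw [hB, hA]
    have : seam L c < arcosh (Real.cosh (seam L c) * Real.cosh c) := by
      apply lt_arcosh _ _ hspos.le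
      nlinarith [Real.cosh_pos (seam L c)]
    linarith
end

section
/- Fix an integer g ≥ 2, set L = cos(π/(g+1)), and for c > 0 let s(c) = 2·arsinh(L/sinh(c/2)). Then for every c > 0 one has ℓ_α(c,c) > ℓ_β(c,c); that is, at twist parameter t = c the curve α is strictly longer than β. -/
lemma arcosh_nonneg {x : ℝ} (hx : 1 ≤ x) : 0 ≤ arcosh x := by
  unfold arcosh
  apply Real.log_nonneg
  have := Real.sqrt_nonneg (x ^ 2 - 1)
  linarith

lemma cosh_arcosh {x : ℝ} (hx : 1 ≤ x) : Real.cosh (arcosh x) = x := by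
  have h1 : 0 ≤ x ^ 2 - 1 := by nlinarith
  have hs : Real.sqrt (x ^ 2 - 1) ^ 2 = x ^ 2 - 1 := Real.sq_sqrt h1
  have hsn : 0 ≤ Real.sqrt (x ^ 2 - 1) := Real.sqrt_nonneg _
  have hy : 0 < x + Real.sqrt (x ^ 2 - 1) := by linarith
  unfold arcosh
  rw [Real.cosh_eq, Real.exp_log hy, Real.exp_neg, Real.exp_log hy]
  field_simp
  nlinarith

/-- Fix an integer `g ≥ 2`, set `L = cos(π/(g+1))`, and for `c > 0` let
`s(c) = 2·arsinh(L/sinh(c/2))`. Then for every `c > 0` one has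
`ℓ_α(c,c) > ℓ_β(c,c)`; that is, at twist parameter `t = c` the curve `α` is strictly
longer than `β`. -/
theorem alpha_longer_at_t_eq_c (g : ℕ) (hg : 2 ≤ g) (L : ℝ)
    (hL : L = Real.cos (Real.pi / (g + 1))) :
    ∀ c : ℝ, 0 < c → ellAlpha L c c > ellBeta L c c := by
  intro c hc
  set S := Real.cosh (seam L c / 2) with hS
  set C := Real.cosh (c / 2) with hC
  set σ := Real.sinh (c / 2) with hσ
  have hS1 : 1 ≤ S := Real.one_le_cosh _
  have hC1 : 1 ≤ C := Real.one_le_cosh _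
  have hσpos : 0 < σ := Real.sinh_pos_iff.2 (by linarith)
  have hcsq : C ^ 2 = σ ^ 2 + 1 := Real.cosh_sq _
  -- rewrite ellBeta with t = c
  have hcc : c - c / 2 = c / 2 := by ring
  have hseam : Real.cosh (seam L c) = 2 * S ^ 2 - 1 := by
    have : seam L c = 2 * (seam L c / 2) := by ring
    rw [this, Real.cosh_two_mul, ← hS]
    have := Real.cosh_sq (seam L c / 2)
    nlinarith
  have hA : 1 ≤ S * C := one_le_mul_of_one_le_of_one_le hS1 hC1
  set B : ℝ := Real.cosh (seam L c) * C * C - σ * σ with hB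
  have hBval : B = 2 * S ^ 2 * C ^ 2 - C ^ 2 - σ ^ 2 := by
    rw [hB, hseam]; ring
  have hB1 : 1 ≤ B := by nlinarith [mul_nonneg (by nlinarith : (0:ℝ) ≤ S^2 - 1) (by nlinarith : (0:ℝ) ≤ C^2)]
  have hlt : B < 2 * (S * C) ^ 2 - 1 := by nlinarith
  have key : arcosh B < 2 * arcosh (S * C) := by
    have h2 : Real.cosh (2 * arcosh (S * C)) = 2 * (S * C) ^ 2 - 1 := by
      rw [Real.cosh_two_mul, cosh_arcosh hA]
      have h3 : Real.cosh (arcosh (S*C)) ^ 2 - Real.sinh (arcosh (S*C)) ^ 2 = 1 :=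
        Real.cosh_sq_sub_sinh_sq _
      rw [cosh_arcosh hA] at h3
      nlinarith
    have hlt2 : Real.cosh (arcosh B) < Real.cosh (2 * arcosh (S * C)) := by
      rw [cosh_arcosh hB1, h2]; exact hlt
    have := Real.cosh_lt_cosh.1 hlt2
    rwa [abs_of_nonneg (arcosh_nonneg hB1),
      abs_of_nonneg (by have := arcosh_nonneg hA; linarith)] at this
  unfold ellAlpha ellBeta
  rw [hcc]
  rw [← hS, ← hC, ← hσ]
  linarith [key]
end

section
/- For any fixed reals c > 0 and s ≥ 0, the function t ↦ cosh(s)·cosh(t/2)·cosh(c−t/2) − sinh(t/2)·sinh(c−t/2) is strictly decreasing on the interval [0,c]; consequently, for fixed c > 0 the length ℓ_β(c,t) is strictly decreasing in t on [0,c]. -/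
lemma arcosh_lt_arcosh {x y : ℝ} (hx : 1 ≤ x) (hxy : x < y) : arcosh x < arcosh y := by
  unfold arcosh
  apply Real.log_lt_log
  · have := Real.sqrt_nonneg (x ^ 2 - 1); linarith
  · have hsq : Real.sqrt (x ^ 2 - 1) ≤ Real.sqrt (y ^ 2 - 1) :=
      Real.sqrt_le_sqrt (by nlinarith)
    linarith

lemma key_identity (c s t : ℝ) :
    Real.cosh s * Real.cosh (t / 2) * Real.cosh (c - t / 2)
      - Real.sinh (t / 2) * Real.sinh (c - t / 2)
    = (Real.cosh s - 1) * Real.cosh c / 2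
      + (Real.cosh s + 1) / 2 * Real.cosh (t - c) := by
  have h1 := Real.cosh_add (t / 2) (c - t / 2)
  have h2 := Real.cosh_sub (t / 2) (c - t / 2)
  have e1 : t / 2 + (c - t / 2) = c := by ring
  have e2 : t / 2 - (c - t / 2) = t - c := by ring
  rw [e1] at h1; rw [e2] at h2
  linear_combination (-(Real.cosh s - 1) / 2) * h1 + (-(Real.cosh s + 1) / 2) * h2

/-- For any fixed reals `c > 0` and `s ≥ 0`, the function
`t ↦ cosh(s)·cosh(t/2)·cosh(c−t/2) − sinh(t/2)·sinh(c−t/2)` is strictly decreasing on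
the interval `[0,c]`; consequently, for fixed `c > 0` the length
`ℓ_β(c,t) = 2·arcosh(cosh(s)·cosh(t/2)·cosh(c−t/2) − sinh(t/2)·sinh(c−t/2))`
is strictly decreasing in `t` on `[0,c]`. -/
theorem beta_strictAnti_in_twist (c s : ℝ) (hc : 0 < c) (hs : 0 ≤ s) :
    StrictAntiOn
      (fun t => Real.cosh s * Real.cosh (t / 2) * Real.cosh (c - t / 2)
        - Real.sinh (t / 2) * Real.sinh (c - t / 2)) (Set.Icc 0 c) ∧
    StrictAntiOn
      (fun t => 2 * arcosh (Real.cosh s * Real.cosh (t / 2) * Real.cosh (c - t / 2)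
        - Real.sinh (t / 2) * Real.sinh (c - t / 2))) (Set.Icc 0 c) := by
  have hcs : 1 ≤ Real.cosh s := Real.one_le_cosh s
  have hfirst : StrictAntiOn
      (fun t => Real.cosh s * Real.cosh (t / 2) * Real.cosh (c - t / 2)
        - Real.sinh (t / 2) * Real.sinh (c - t / 2)) (Set.Icc 0 c) := by
    intro x hx y hy hxy
    simp only
    rw [key_identity, key_identity]
    have hcosh : Real.cosh (y - c) < Real.cosh (x - c) := by
      rw [Real.cosh_lt_cosh]
      rw [abs_of_nonpos (by linarith [hy.2]), abs_of_nonpos (by linarith [hx.2])]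
      linarith
    nlinarith [hcosh]
  refine ⟨hfirst, ?_⟩
  intro x hx y hy hxy
  have hlt := hfirst hx hy hxy
  simp only at hlt ⊢
  have hge1 : 1 ≤ Real.cosh s * Real.cosh (y / 2) * Real.cosh (c - y / 2)
      - Real.sinh (y / 2) * Real.sinh (c - y / 2) := by
    rw [key_identity]
    have h1 : 1 ≤ Real.cosh c := Real.one_le_cosh c
    have h2 : 1 ≤ Real.cosh (y - c) := Real.one_le_cosh _
    nlinarith
  have := arcosh_lt_arcosh hge1 hlt
  linarith
end

section
/- Fix an integer g ≥ 2, set L = cos(π/(g+1)), for c > 0 let s(c) = 2·arsinh(L/sinh(c/2)), and let c₁ > 0 be the unique solution of cosh(c₁) = 2L² + cosh(s(c₁)). Then for all c with 0 < c < c₁ and all t with 0 ≤ t ≤ c, one has ℓ_β(c,t) > 2c; in particular the equation ℓ_β(c,t) = ℓ_γ(c,t) has no solution with 0 < c < c₁ and 0 ≤ t ≤ c. -/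
private lemma cosh_eq_half (x : ℝ) : Real.cosh x = 2 * Real.sinh (x / 2) ^ 2 + 1 := by
  have h1 := Real.cosh_sq (x / 2)
  have h2 := Real.cosh_two_mul (x / 2)
  rw [show 2 * (x / 2) = x by ring] at h2
  linarith

private lemma sinh_seam_half (L c : ℝ) : Real.sinh (seam L c / 2) = L / Real.sinh (c / 2) := by
  unfold seam
  rw [show 2 * Real.arsinh (L / Real.sinh (c / 2)) / 2 = Real.arsinh (L / Real.sinh (c / 2)) by
    ring]
  exact Real.sinh_arsinh _

/-- Fix an integer `g ≥ 2`, set `L = cos(π/(g+1))`, for `c > 0` let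
`s(c) = 2·arsinh(L/sinh(c/2))`, and let `c₁ > 0` be the unique solution of
`cosh(c₁) = 2L² + cosh(s(c₁))`. Then for all `c` with `0 < c < c₁` and all `t` with
`0 ≤ t ≤ c`, one has `ℓ_β(c,t) > 2c`; in particular the equation
`ℓ_β(c,t) = ℓ_γ(c,t)` has no solution with `0 < c < c₁` and `0 ≤ t ≤ c`. -/
theorem beta_gt_gamma_below_c1 (g : ℕ) (hg : 2 ≤ g) (L : ℝ)
    (hL : L = Real.cos (Real.pi / (g + 1))) (c₁ : ℝ) (hc₁ : 0 < c₁)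
    (heq : Real.cosh c₁ = 2 * L ^ 2 + Real.cosh (seam L c₁))
    (huniq : ∀ c : ℝ, 0 < c → Real.cosh c = 2 * L ^ 2 + Real.cosh (seam L c) → c = c₁) :
    ∀ c t : ℝ, 0 < c → c < c₁ → 0 ≤ t → t ≤ c →
      ellBeta L c t > 2 * c := by
  intro c t hc hcc₁ ht htc
  clear huniq
  have hπ := Real.pi_pos
  -- L > 0
  have hg3 : (3 : ℝ) ≤ (g : ℝ) + 1 := by
    have : (2 : ℝ) ≤ (g : ℝ) := by exact_mod_cast hg
    linarith
  have hL0 : 0 < L := by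
    rw [hL]
    apply Real.cos_pos_of_mem_Ioo
    constructor
    · have : 0 < Real.pi / ((g : ℝ) + 1) := by positivity
      linarith
    · exact div_lt_div_of_pos_left hπ (by norm_num) (by linarith)
  -- seam is positive and strictly decreasing: compare c and c₁
  have hsc : 0 < Real.sinh (c / 2) := Real.sinh_pos_iff.mpr (by linarith)
  have hsc₁ : 0 < Real.sinh (c₁ / 2) := Real.sinh_pos_iff.mpr (by linarith)
  have hsinh_lt : Real.sinh (c / 2) < Real.sinh (c₁ / 2) :=
    Real.sinh_lt_sinh.mpr (by linarith)
  have hdivlt : L / Real.sinh (c₁ / 2) < L / Real.sinh (c / 2) :=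
    div_lt_div_of_pos_left hL0 hsc hsinh_lt
  have hseam_lt : seam L c₁ < seam L c := by
    unfold seam
    have := Real.arsinh_lt_arsinh.mpr hdivlt
    linarith
  have hseam₁_pos : 0 < seam L c₁ := by
    unfold seam
    have : 0 < Real.arsinh (L / Real.sinh (c₁ / 2)) :=
      Real.arsinh_pos_iff.mpr (div_pos hL0 hsc₁)
    linarith
  have hcosh_seam_lt : Real.cosh (seam L c₁) < Real.cosh (seam L c) := by
    rw [Real.cosh_lt_cosh, abs_of_pos hseam₁_pos, abs_of_pos (by linarith)]
    exact hseam_lt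
  -- 2L² + cosh(seam L c) > cosh c
  have hcoshc : Real.cosh c < Real.cosh c₁ := by
    rw [Real.cosh_lt_cosh, abs_of_pos hc, abs_of_pos hc₁]; exact hcc₁
  have hM : Real.cosh c < 2 * L ^ 2 + Real.cosh (seam L c) := by
    have : Real.cosh c₁ < 2 * L ^ 2 + Real.cosh (seam L c) := by
      rw [heq]; linarith
    linarith
  -- relate L² to sinh halves
  have hLs : Real.sinh (seam L c / 2) * Real.sinh (c / 2) = L := by
    rw [sinh_seam_half]
    field_simp
  set K := Real.cosh (seam L c) with hK
  set C := Real.cosh c with hC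
  have hKval : K = 2 * Real.sinh (seam L c / 2) ^ 2 + 1 := cosh_eq_half _
  have hCval : C = 2 * Real.sinh (c / 2) ^ 2 + 1 := cosh_eq_half _
  have hL2 : 2 * L ^ 2 = (K - 1) * (C - 1) / 2 := by
    rw [hKval, hCval]
    linear_combination (-2) * (Real.sinh (seam L c / 2) * Real.sinh (c / 2) + L) * hLs
  -- product formulas
  have e1 : Real.cosh c
      = Real.cosh (c - t / 2) * Real.cosh (t / 2) + Real.sinh (c - t / 2) * Real.sinh (t / 2) := by
    have := Real.cosh_add (c - t / 2) (t / 2)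
    rw [show c - t / 2 + t / 2 = c by ring] at this
    linarith
  have e2 : Real.cosh (c - t)
      = Real.cosh (c - t / 2) * Real.cosh (t / 2) - Real.sinh (c - t / 2) * Real.sinh (t / 2) := by
    have := Real.cosh_sub (c - t / 2) (t / 2)
    rw [show c - t / 2 - t / 2 = c - t by ring] at this
    linarith
  set X := K * Real.cosh (t / 2) * Real.cosh (c - t / 2)
      - Real.sinh (t / 2) * Real.sinh (c - t / 2) with hX
  have hD1 : (1 : ℝ) ≤ Real.cosh (c - t) := Real.one_le_cosh _
  have hK1 : (1 : ℝ) ≤ K := Real.one_le_cosh _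
  have hXval : X = (K * (C + Real.cosh (c - t)) - (C - Real.cosh (c - t))) / 2 := by
    rw [hX, hC]
    linear_combination ((1 - K) / 2) * e1 + (-(K + 1) / 2) * e2
  have hXgt : C < X := by
    rw [hXval]
    nlinarith [hM, hL2, mul_nonneg (by linarith : (0:ℝ) ≤ K + 1)
      (by linarith : (0:ℝ) ≤ Real.cosh (c - t) - 1)]
  -- conclude via arcosh
  have hC1 : (1 : ℝ) ≤ C := Real.one_le_cosh _
  have hsinhc : 0 ≤ Real.sinh c := le_of_lt (Real.sinh_pos_iff.mpr hc)
  have hsinh_sq : Real.sinh c ^ 2 = C ^ 2 - 1 := by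
    have := Real.cosh_sq c; rw [← hC] at this; linarith
  have hsqrt : Real.sinh c ≤ Real.sqrt (X ^ 2 - 1) := by
    rw [show Real.sinh c = Real.sqrt (Real.sinh c ^ 2) by rw [Real.sqrt_sq hsinhc]]
    apply Real.sqrt_le_sqrt
    have hCX : C ^ 2 ≤ X ^ 2 := pow_le_pow_left₀ (by linarith : (0:ℝ) ≤ C) (le_of_lt hXgt) 2
    linarith
  have hexp : Real.exp c < X + Real.sqrt (X ^ 2 - 1) := by
    have := Real.cosh_add_sinh c
    rw [← hC] at this
    linarith
  have hpos : 0 < X + Real.sqrt (X ^ 2 - 1) := by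
    have := Real.sqrt_nonneg (X ^ 2 - 1); linarith
  have hlog : c < Real.log (X + Real.sqrt (X ^ 2 - 1)) :=
    (Real.lt_log_iff_exp_lt hpos).mpr hexp
  show 2 * arcosh X > 2 * c
  unfold arcosh
  linarith
end

section
/- Fix an integer g ≥ 2, set L = cos(π/(g+1)), for c > 0 let s(c) = 2·arsinh(L/sinh(c/2)), and let c₁ > 0 be the unique solution of cosh(c₁) = 2L² + cosh(s(c₁)). Then for every c ≥ c₁ there exists a unique u ∈ (0,1] such that ℓ_β(c, c·u) = 2c. -/
lemma arcosh_cosh_s8 {y : ℝ} (hy : 0 ≤ y) : arcosh (Real.cosh y) = y := by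
  have hsh : 0 ≤ Real.sinh y := by
    rw [← Real.sinh_zero]
    exact Real.sinh_le_sinh.2 hy
  have h1 : Real.cosh y ^ 2 - 1 = Real.sinh y ^ 2 := by
    have := Real.cosh_sq y; linarith
  unfold arcosh
  rw [h1, Real.sqrt_sq hsh, Real.cosh_add_sinh, Real.log_exp]

lemma seam_identity {L c : ℝ} (hc : 0 < c) :
    (Real.cosh (seam L c) - 1) * (Real.cosh c - 1) = 4 * L ^ 2 := by
  have hsc : 0 < Real.sinh (c / 2) := Real.sinh_pos_iff.2 (by linarith)
  have h1 : Real.cosh (seam L c) = 2 * (L / Real.sinh (c / 2)) ^ 2 + 1 := by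
    unfold seam
    rw [Real.cosh_two_mul, Real.cosh_sq, Real.sinh_arsinh]; ring
  have h2 : Real.cosh c = 2 * Real.sinh (c / 2) ^ 2 + 1 := by
    have h0 := Real.cosh_two_mul (c / 2)
    have h3 := Real.cosh_sq (c / 2)
    rw [show 2 * (c / 2) = c by ring] at h0
    linarith
  rw [h1, h2]
  field_simp
  ring

lemma cosh_inj_nonneg {a b : ℝ} (ha : 0 ≤ a) (hb : 0 ≤ b)
    (h : Real.cosh a = Real.cosh b) : a = b := by
  have h1 : |a| ≤ |b| := Real.cosh_le_cosh.1 h.le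
  have h2 : |b| ≤ |a| := Real.cosh_le_cosh.1 h.ge
  rw [abs_of_nonneg ha, abs_of_nonneg hb] at h1 h2
  linarith

set_option maxHeartbeats 1600000 in
/-- Fix an integer `g ≥ 2`, set `L = cos(π/(g+1))`, for `c > 0` let
`s(c) = 2·arsinh(L/sinh(c/2))`, and let `c₁ > 0` be the unique solution of
`cosh(c₁) = 2L² + cosh(s(c₁))`. Then for every `c ≥ c₁` there exists a unique
`u ∈ (0,1]` such that `ℓ_β(c, c·u) = 2c`. -/
theorem exists_unique_u1 (g : ℕ) (hg : 2 ≤ g) (L : ℝ)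
    (hL : L = Real.cos (Real.pi / (g + 1))) (c₁ : ℝ) (hc₁ : 0 < c₁)
    (heq : Real.cosh c₁ = 2 * L ^ 2 + Real.cosh (seam L c₁))
    (huniq : ∀ c : ℝ, 0 < c → Real.cosh c = 2 * L ^ 2 + Real.cosh (seam L c) → c = c₁) :
    ∀ c : ℝ, c₁ ≤ c →
      ∃! u : ℝ, u ∈ Set.Ioc (0 : ℝ) 1 ∧ ellBeta L c (c * u) = 2 * c := by
  have hpi := Real.pi_pos
  have hg1 : (3 : ℝ) ≤ (g : ℝ) + 1 := by
    have : (2 : ℝ) ≤ (g : ℝ) := by exact_mod_cast hg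
    linarith
  have hLpos : 0 < L := by
    rw [hL]
    apply Real.cos_pos_of_mem_Ioo
    constructor
    · have : 0 < Real.pi / ((g : ℝ) + 1) := by positivity
      linarith
    · have h3 : Real.pi / ((g : ℝ) + 1) ≤ Real.pi / 3 := by
        apply div_le_div_of_nonneg_left hpi.le (by norm_num) hg1
      linarith
  intro c hc
  have hc0 : 0 < c := lt_of_lt_of_le hc₁ hc
  obtain ⟨X, hX⟩ : ∃ X, Real.cosh c = X := ⟨_, rfl⟩
  obtain ⟨S, hS⟩ : ∃ S, Real.cosh (seam L c) = S := ⟨_, rfl⟩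
  have hx : 0 < X - 1 := by
    have := Real.one_lt_cosh.2 hc0.ne'; rw [hX] at this; linarith
  have hseam : (S - 1) * (X - 1) = 4 * L ^ 2 := by
    have := seam_identity (L := L) hc0; rw [hX, hS] at this; exact this
  have hx1 : 0 < Real.cosh c₁ - 1 := by
    have := Real.one_lt_cosh.2 hc₁.ne'; linarith
  have hseam1 := seam_identity (L := L) hc₁
  have hx1eq : (Real.cosh c₁ - 1) ^ 2 = 2 * L ^ 2 * (Real.cosh c₁ - 1) + 4 * L ^ 2 := by
    nlinarith [hseam1, heq]
  have hx1gt : 2 * L ^ 2 < Real.cosh c₁ - 1 := by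
    nlinarith [mul_pos hLpos hLpos]
  have hxge : Real.cosh c₁ - 1 ≤ X - 1 := by
    have h : Real.cosh c₁ ≤ Real.cosh c := by
      apply Real.cosh_le_cosh.2
      rw [abs_of_pos hc₁, abs_of_pos hc0]; exact hc
    rw [hX] at h; linarith
  have hS1 : 1 < S := by nlinarith [mul_pos hLpos hLpos]
  have hSpos : (0 : ℝ) < 1 + S := by linarith
  have hXpos : (1 : ℝ) ≤ X := by linarith
  have hfac : 0 ≤ (X - 1 - (Real.cosh c₁ - 1)) * ((X - 1) + (Real.cosh c₁ - 1) - 2 * L ^ 2) :=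
    mul_nonneg (by linarith) (by linarith)
  have h2 : 2 * L ^ 2 * (X - 1) + 4 * L ^ 2 ≤ (X - 1) ^ 2 := by nlinarith [hfac, hx1eq]
  have hseamX : (S - 1) * (X - 1) * X = 4 * L ^ 2 * X := by
    linear_combination X * hseam
  have hkey : 1 + S ≤ X * (3 - S) := by
    nlinarith [h2, hseam, hseamX, hx]
  obtain ⟨R, hRdef⟩ : ∃ R, R = X * (3 - S) / (1 + S) := ⟨_, rfl⟩
  have hR1 : 1 ≤ R := by
    rw [hRdef, le_div_iff₀ hSpos]; linarith
  have hRX : R < X := by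
    rw [hRdef, div_lt_iff₀ hSpos]
    nlinarith [mul_pos (by linarith : (0:ℝ) < X) (by linarith : (0:ℝ) < S - 1)]
  -- the main structural identity
  have hF : ∀ u : ℝ,
      Real.cosh (seam L c) * Real.cosh (c * u / 2) * Real.cosh (c - c * u / 2)
        - Real.sinh (c * u / 2) * Real.sinh (c - c * u / 2)
      = X * (S - 1) / 2 + Real.cosh (c - c * u) * (S + 1) / 2 := by
    intro u
    have h1 := Real.cosh_add (c * u / 2) (c - c * u / 2)
    have h2 := Real.cosh_sub (c - c * u / 2) (c * u / 2)
    rw [show c * u / 2 + (c - c * u / 2) = c by ring, hX] at h1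
    rw [show c - c * u / 2 - c * u / 2 = c - c * u by ring] at h2
    rw [hS]
    linear_combination ((1 - S) / 2) * h1 - ((S + 1) / 2) * h2
  -- equivalence: ellBeta L c (c*u) = 2*c ↔ cosh (c - c*u) = R
  have hequiv : ∀ u : ℝ, (ellBeta L c (c * u) = 2 * c ↔ Real.cosh (c - c * u) = R) := by
    intro u
    have hFu := hF u
    have hFge : (1 : ℝ) ≤ Real.cosh (seam L c) * Real.cosh (c * u / 2)
        * Real.cosh (c - c * u / 2) - Real.sinh (c * u / 2) * Real.sinh (c - c * u / 2) := by
      rw [hFu]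
      nlinarith [Real.one_le_cosh (c - c * u), hXpos, hS1]
    constructor
    · intro h
      simp only [ellBeta] at h
      have harc : arcosh (Real.cosh (seam L c) * Real.cosh (c * u / 2)
          * Real.cosh (c - c * u / 2)
          - Real.sinh (c * u / 2) * Real.sinh (c - c * u / 2)) = c := by linarith
      have hcc := cosh_arcosh hFge
      rw [harc, hX, hFu] at hcc
      rw [hRdef, eq_div_iff hSpos.ne']
      linear_combination (-2 : ℝ) * hcc
    · intro h
      have hFX : Real.cosh (seam L c) * Real.cosh (c * u / 2) * Real.cosh (c - c * u / 2)
          - Real.sinh (c * u / 2) * Real.sinh (c - c * u / 2) = Real.cosh c := by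
        rw [hFu, h, hRdef, hX]
        field_simp
        ring
      simp only [ellBeta]
      rw [hFX, arcosh_cosh_s8 hc0.le]
  -- existence
  have haRnn : 0 ≤ arcosh R := arcosh_nonneg hR1
  have haRlt : arcosh R < c := by
    by_contra hcon
    push_neg at hcon
    have h1 : Real.cosh c ≤ Real.cosh (arcosh R) := by
      apply Real.cosh_le_cosh.2
      rw [abs_of_pos hc0, abs_of_nonneg haRnn]; exact hcon
    rw [cosh_arcosh hR1, hX] at h1
    linarith
  have hcu₀ : c - c * ((c - arcosh R) / c) = arcosh R := by
    field_simp
    ring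
  refine ⟨(c - arcosh R) / c, ⟨⟨?_, ?_⟩, ?_⟩, ?_⟩
  · apply div_pos (by linarith) hc0
  · rw [div_le_one hc0]; linarith
  · rw [hequiv, hcu₀, cosh_arcosh hR1]
  · rintro u ⟨⟨hu0, hu1⟩, hue⟩
    rw [hequiv] at hue
    have h1 : Real.cosh (c - c * u) = Real.cosh (c - c * ((c - arcosh R) / c)) := by
      rw [hue, hcu₀, cosh_arcosh hR1]
    have h2 : c - c * u = c - c * ((c - arcosh R) / c) := by
      apply cosh_inj_nonneg _ _ h1
      · nlinarith
      · rw [hcu₀]; exact haRnn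
    have h3 : c * u = c * ((c - arcosh R) / c) := by linarith
    exact mul_left_cancel₀ hc0.ne' h3
end

section
/- Let L > 0 and c > 0 be real, and let s > 0 satisfy sinh(c/2)·sinh(s/2) = √L. Set C = cosh(c/2). Then the equation cosh(c) = cosh(s)·cosh(c/4)·cosh(3c/4) − sinh(c/4)·sinh(3c/4) holds if and only if L = (C−1)²·(2C+1)/(2C−1). -/
/-- Let `L > 0` and `c > 0` be real, and let `s > 0` satisfy
`sinh(c/2)·sinh(s/2) = √L`. Set `C = cosh(c/2)`. Then the equation
`cosh(c) = cosh(s)·cosh(c/4)·cosh(3c/4) − sinh(c/4)·sinh(3c/4)` holds if and only if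
`L = (C−1)²·(2C+1)/(2C−1)`. -/
theorem half_twist_equation_reduction (L c s : ℝ) (hL : 0 < L) (hc : 0 < c) (hs : 0 < s)
    (hseam : Real.sinh (c / 2) * Real.sinh (s / 2) = Real.sqrt L)
    (C : ℝ) (hC : C = Real.cosh (c / 2)) :
    (Real.cosh c
        = Real.cosh s * Real.cosh (c / 4) * Real.cosh (3 * c / 4)
          - Real.sinh (c / 4) * Real.sinh (3 * c / 4))
      ↔ L = (C - 1) ^ 2 * (2 * C + 1) / (2 * C - 1) := by
  have hC1 : 1 < C := by
    rw [hC]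
    exact Real.one_lt_cosh.mpr (by positivity)
  -- basic identities
  have hcoshc : Real.cosh c = 2 * C ^ 2 - 1 := by
    have h2 : c = 2 * (c / 2) := by ring
    rw [h2, Real.cosh_two_mul, hC]
    rw [Real.sinh_sq]
    ring
  have hP : Real.sinh (s / 2) ^ 2 * (C ^ 2 - 1) = L := by
    have h1 : (Real.sinh (c / 2) * Real.sinh (s / 2)) ^ 2 = L := by
      rw [hseam, Real.sq_sqrt hL.le]
    have h2 : Real.sinh (c / 2) ^ 2 = C ^ 2 - 1 := by
      rw [hC, Real.sinh_sq]
    nlinarith [h1, h2]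
  have hcoshs : Real.cosh s = 1 + 2 * Real.sinh (s / 2) ^ 2 := by
    have : s = 2 * (s / 2) := by ring
    rw [this, Real.cosh_two_mul, Real.cosh_sq]
    ring
  have e1 : Real.cosh (c / 4) * Real.cosh (3 * c / 4)
      + Real.sinh ( c / 4) * Real.sinh (3 * c / 4) = 2 * C ^ 2 - 1 := by
    rw [← hcoshc, ← Real.cosh_add]
    have h14 : c / 4 + 3 * c / 4 = c := by ring
    rw [h14]
  have e2 : Real.cosh (c / 4) * Real.cosh (3 * c / 4)
      - Real.sinh (c / 4) * Real.sinh (3 * c / 4) = C := by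
    have := Real.cosh_sub (3 * c / 4) (c / 4)
    have h34 : 3 * c / 4 - c / 4 = c / 2 := by ring
    rw [h34, ← hC] at this
    linarith [this]
  set P := Real.sinh (s / 2) ^ 2 with hPdef
  set X := Real.cosh (c / 4) * Real.cosh (3 * c / 4) with hX
  set Y := Real.sinh (c / 4) * Real.sinh (3 * c / 4) with hY
  have hXv : X = (2 * C ^ 2 - 1 + C) / 2 := by linarith
  have hYv : Y = (2 * C ^ 2 - 1 - C) / 2 := by linarith
  clear_value P X Y
  clear hPdef hseam
  have hd1 : (2 : ℝ) * C - 1 ≠ 0 := by nlinarith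
  have hd2 : C ^ 2 - 1 > 0 := by nlinarith
  constructor
  · intro h
    rw [hcoshc, hcoshs, mul_assoc, ← hX, hXv, hYv] at h
    -- h : 2C²-1 = (1+2P) * ((2C²-1+C)/2) - (2C²-1-C)/2
    have hPval : P * (2 * C ^ 2 + C - 1) = 2 * C ^ 2 - C - 1 := by nlinarith
    rw [← hP, eq_div_iff hd1]
    linear_combination (C - 1) * hPval
  · intro h
    have hLval : L * (2 * C - 1) = (C - 1) ^ 2 * (2 * C + 1) := by
      rw [h, div_mul_cancel₀ _ hd1]
    have hPval : P * (2 * C ^ 2 + C - 1) = 2 * C ^ 2 - C - 1 := by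
      have h21 : (2 * C - 1) > 0 := by linarith
      have : P * (C ^ 2 - 1) * (2 * C - 1) = (C - 1) ^ 2 * (2 * C + 1) := by
        rw [hP]; exact hLval
      -- P*(C²-1)*(2C-1) = (C-1)²(2C+1); note (C²-1)(2C-1) = (C-1)(C+1)(2C-1)
      -- want P*(2C²+C-1) = 2C²-C-1, i.e. P*(C+1)(2C-1) = (C-1)(2C+1)
      have hCm : C - 1 > 0 := by linarith
      have key : (P * (2 * C ^ 2 + C - 1) - (2 * C ^ 2 - C - 1)) * (C - 1) = 0 := by
        nlinarith [this]
      rcases mul_eq_zero.mp key with h0 | h0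
      · linarith
      · linarith
    rw [hcoshc, hcoshs, mul_assoc, ← hX, hXv, hYv]
    linear_combination -hPval
end

section
/- Let L > 0 be real and let c, s, c_α, s_α be positive reals and t, t_α nonnegative reals satisfying the four relations sinh(c/2)·sinh(s/2) = L, cosh(c_α/2) = cosh(s/2)·cosh(t/2), sinh(c_α/2)·sinh(s_α/2) = L, and cosh(c/2) = cosh(s_α/2)·cosh(t_α/2). Then t = 0 if and only if t_α = 0. -/
theorem cosh_eq_cosh_of_nonneg {x y : ℝ} (hx : 0 ≤ x) (hy : 0 ≤ y)
    (h : Real.cosh x = Real.cosh y) : x = y :=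
  Real.cosh_strictMonoOn.injOn hx hy h

theorem twist_aux {L c s cα sα tα : ℝ} (hL : 0 < L)
    (hc : 0 < c) (hs : 0 < s) (hcα : 0 < cα) (hsα : 0 < sα)
    (htα : 0 ≤ tα)
    (h1 : Real.sinh (c / 2) * Real.sinh (s / 2) = L)
    (h2 : Real.cosh (cα / 2) = Real.cosh (s / 2))
    (h3 : Real.sinh (cα / 2) * Real.sinh (sα / 2) = L)
    (h4 : Real.cosh (c / 2) = Real.cosh (sα / 2) * Real.cosh (tα / 2)) :
    tα = 0 := by
  have hcs : cα / 2 = s / 2 :=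
    cosh_eq_cosh_of_nonneg (by linarith) (by linarith) h2
  rw [hcs] at h3
  have hspos : 0 < Real.sinh (s / 2) := Real.sinh_pos_iff.2 (by linarith)
  have hsin : Real.sinh (sα / 2) = Real.sinh (c / 2) := by
    nlinarith [h1, h3]
  have hsc : sα / 2 = c / 2 := Real.sinh_injective hsin
  rw [hsc] at h4
  have hpos : 0 < Real.cosh (c / 2) := Real.cosh_pos _
  have h1' : Real.cosh (tα / 2) = 1 := by nlinarith [h4]
  have : tα / 2 = 0 := by
    by_contra hne
    have := Real.one_lt_cosh.2 hne
    linarith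
  linarith

/-- Let `L > 0` be real and let `c, s, c_α, s_α` be positive reals and
`t, t_α` nonnegative reals satisfying the four relations
`sinh(c/2)·sinh(s/2) = L`, `cosh(c_α/2) = cosh(s/2)·cosh(t/2)`,
`sinh(c_α/2)·sinh(s_α/2) = L`, and `cosh(c/2) = cosh(s_α/2)·cosh(t_α/2)`.
Then `t = 0` if and only if `t_α = 0`. -/
theorem twist_zero_iff (L c s cα sα t tα : ℝ) (hL : 0 < L)
    (hc : 0 < c) (hs : 0 < s) (hcα : 0 < cα) (hsα : 0 < sα)
    (ht : 0 ≤ t) (htα : 0 ≤ tα)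
    (h1 : Real.sinh (c / 2) * Real.sinh (s / 2) = L)
    (h2 : Real.cosh (cα / 2) = Real.cosh (s / 2) * Real.cosh (t / 2))
    (h3 : Real.sinh (cα / 2) * Real.sinh (sα / 2) = L)
    (h4 : Real.cosh (c / 2) = Real.cosh (sα / 2) * Real.cosh (tα / 2)) :
    t = 0 ↔ tα = 0 := by
  constructor
  · intro h
    rw [h, show (0:ℝ)/2 = 0 by norm_num, Real.cosh_zero, mul_one] at h2
    exact twist_aux hL hc hs hcα hsα htα h1 h2 h3 h4
  · intro h
    rw [h, show (0:ℝ)/2 = 0 by norm_num, Real.cosh_zero, mul_one] at h4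
    exact twist_aux hL hcα hsα hc hs ht h3 h4 h1 h2
end
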